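/- Assume ∩_{ξ∈Ξ} I_ξ = ∅, equivalently c_min < c_max. Then there exists a unique probability distribution π on [c_min, c_max] such that, for every initial shock ξ₀ ∈ Ξ and every initial value c₀ ∈ [c_min, c_max], the distributions of c_t converge to π in the uniform metric d as t → ∞. -/

import Mathlib

open MeasureTheory ProbabilityTheory Set Filter Topology

/-- A time-homogeneous Markov chain on a finite state space `E` with one-step transition
probabilities `p`, characterised through the probabilities of finite words. -/
def IsMarkovChain {Ω E : Type*} [MeasurableSpace Ω] (Pr : Measure Ω)
    (p : E → E → ENNReal) (Z : ℕ → Ω → E) : Prop :=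
  ∀ (t : ℕ) (w : ℕ → E),
    Pr {ω | ∀ j ≤ t + 1, Z j ω = w j} =
      Pr {ω | ∀ j ≤ t, Z j ω = w j} * p (w t) (w (t + 1))


set_option linter.unusedSectionVars false
set_option linter.unusedVariables false


section QTheory

variable {Ξ : Type} [Fintype Ξ] [Nonempty Ξ]

/-- the n-step conditional CDF iteration. -/
noncomputable def Qf (f : ℝ → Ξ → ℝ) (pR : Ξ → Ξ → ℝ) : ℕ → Ξ → ℝ → ℝ → ℝ
  | 0, ξ, c, r => if f c ξ ≤ r then 1 else 0
  | n+1, ξ, c, r => ∑ a, pR ξ a * Qf f pR n a (f c ξ) r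

@[simp] lemma Qf_zero (f : ℝ → Ξ → ℝ) (pR : Ξ → Ξ → ℝ) (ξ c r) :
    Qf f pR 0 ξ c r = if f c ξ ≤ r then 1 else 0 := rfl

@[simp] lemma Qf_succ (f : ℝ → Ξ → ℝ) (pR : Ξ → Ξ → ℝ) (n ξ c r) :
    Qf f pR (n+1) ξ c r = ∑ a, pR ξ a * Qf f pR n a (f c ξ) r := rfl

/-- All the structural data of the risk-sharing model. -/
structure RSSetup (Ξ : Type) [Fintype Ξ] [Nonempty Ξ] where
  f : ℝ → Ξ → ℝ
  pR : Ξ → Ξ → ℝ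
  cmin : ℝ
  cmax : ℝ
  hpR : ∀ ξ a, 0 < pR ξ a
  hsum : ∀ ξ, ∑ a, pR ξ a = 1
  hlt : cmin < cmax
  hfm : ∀ ξ, Monotone (fun c => f c ξ)
  hrange : ∀ ξ, ∀ c ∈ Icc cmin cmax, f c ξ ∈ Icc cmin cmax
  hstar : ∃ ξs, ∀ c ∈ Icc cmin cmax, f c ξs = cmin

namespace RSSetup

variable (S : RSSetup Ξ)

lemma hpR' : ∀ ξ a, 0 ≤ S.pR ξ a := fun ξ a => (S.hpR ξ a).le

noncomputable def Q : ℕ → Ξ → ℝ → ℝ → ℝ := Qf S.f S.pR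

lemma Q_nonneg : ∀ n ξ c r, 0 ≤ S.Q n ξ c r := by
  intro n
  induction n with
  | zero => intro ξ c r; simp only [Q, Qf_zero]; split <;> norm_num
  | succ n ih =>
    intro ξ c r
    exact Finset.sum_nonneg fun a _ => mul_nonneg (S.hpR' ξ a) (ih a (S.f c ξ) r)

lemma Q_le_one : ∀ n ξ c r, S.Q n ξ c r ≤ 1 := by
  intro n
  induction n with
  | zero => intro ξ c r; simp only [Q, Qf_zero]; split <;> norm_num
  | succ n ih =>
    intro ξ c r
    calc ∑ a, S.pR ξ a * S.Q n a (S.f c ξ) r ≤ ∑ a, S.pR ξ a * 1 :=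
          Finset.sum_le_sum fun a _ => mul_le_mul_of_nonneg_left (ih a (S.f c ξ) r) (S.hpR' ξ a)
      _ = 1 := by simp [S.hsum ξ]

lemma Q_mono_r : ∀ n ξ c {r r' : ℝ}, r ≤ r' → S.Q n ξ c r ≤ S.Q n ξ c r' := by
  intro n
  induction n with
  | zero =>
    intro ξ c r r' h
    simp only [Q, Qf_zero]
    split_ifs with h1 h2 <;> try norm_num
    exact h2 (h1.trans h)
  | succ n ih =>
    intro ξ c r r' h
    exact Finset.sum_le_sum fun a _ =>
      mul_le_mul_of_nonneg_left (ih a (S.f c ξ) h) (S.hpR' ξ a)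

lemma Q_anti_c : ∀ n ξ {c c' : ℝ} (r : ℝ), c ≤ c' → S.Q n ξ c' r ≤ S.Q n ξ c r := by
  intro n
  induction n with
  | zero =>
    intro ξ c c' r h
    simp only [Q, Qf_zero]
    split_ifs with h1 h2 <;> try norm_num
    exact h2 ((S.hfm ξ h).trans h1)
  | succ n ih =>
    intro ξ c c' r h
    exact Finset.sum_le_sum fun a _ =>
      mul_le_mul_of_nonneg_left (ih a r (S.hfm ξ h)) (S.hpR' ξ a)

lemma Q_eq_zero : ∀ n ξ, ∀ c ∈ Icc S.cmin S.cmax, ∀ r, r < S.cmin → S.Q n ξ c r = 0 := by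
  intro n
  induction n with
  | zero =>
    intro ξ c hc r hr
    simp only [Q, Qf_zero]
    rw [if_neg]
    exact not_le.2 (lt_of_lt_of_le hr (S.hrange ξ c hc).1)
  | succ n ih =>
    intro ξ c hc r hr
    simp only [Q, Qf_succ]
    refine Finset.sum_eq_zero fun a _ => ?_
    rw [show Qf S.f S.pR n a (S.f c ξ) r = S.Q n a (S.f c ξ) r from rfl,
      ih a (S.f c ξ) (S.hrange ξ c hc) r hr, mul_zero]

lemma Q_eq_one : ∀ n ξ, ∀ c ∈ Icc S.cmin S.cmax, ∀ r, S.cmax ≤ r → S.Q n ξ c r = 1 := by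
  intro n
  induction n with
  | zero =>
    intro ξ c hc r hr
    simp only [Q, Qf_zero]
    rw [if_pos ((S.hrange ξ c hc).2.trans hr)]
  | succ n ih =>
    intro ξ c hc r hr
    simp only [Q, Qf_succ]
    have : ∀ a ∈ Finset.univ, S.pR ξ a * Qf S.f S.pR n a (S.f c ξ) r = S.pR ξ a := by
      intro a _
      rw [show Qf S.f S.pR n a (S.f c ξ) r = S.Q n a (S.f c ξ) r from rfl,
        ih a (S.f c ξ) (S.hrange ξ c hc) r hr, mul_one]
    rw [Finset.sum_congr rfl this, S.hsum ξ]

/-- local constancy to the right in `r`. -/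
lemma Q_loc_const : ∀ n ξ c r, ∃ h > (0:ℝ), ∀ s, r ≤ s → s < r + h →
    S.Q n ξ c s = S.Q n ξ c r := by
  intro n
  induction n with
  | zero =>
    intro ξ c r
    by_cases hle : S.f c ξ ≤ r
    · exact ⟨1, one_pos, fun s hs _ => by
        simp only [Q, Qf_zero, if_pos hle, if_pos (hle.trans hs)]⟩
    · refine ⟨S.f c ξ - r, by linarith [not_le.1 hle], fun s hs hs' => ?_⟩
      have hns : ¬ S.f c ξ ≤ s := by linarith
      simp only [Q, Qf_zero, if_neg hle, if_neg hns]
  | succ n ih =>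
    intro ξ c r
    have hch : ∀ a : Ξ, ∃ h > (0:ℝ), ∀ s, r ≤ s → s < r + h →
        S.Q n a (S.f c ξ) s = S.Q n a (S.f c ξ) r := fun a => ih a (S.f c ξ) r
    choose H hH hspec using hch
    refine ⟨Finset.univ.inf' Finset.univ_nonempty H, ?_, fun s hs hs' => ?_⟩
    · simp only [gt_iff_lt, Finset.lt_inf'_iff]; exact fun a _ => hH a
    · simp only [Q, Qf_succ]
      refine Finset.sum_congr rfl fun a _ => ?_
      show S.pR ξ a * S.Q n a (S.f c ξ) s = S.pR ξ a * S.Q n a (S.f c ξ) r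
      have hle : Finset.univ.inf' Finset.univ_nonempty H ≤ H a :=
        Finset.inf'_le _ (Finset.mem_univ a)
      rw [hspec a s hs (by linarith)]

end RSSetup

end QTheory

namespace RSSetup

variable {Ξ : Type} [Fintype Ξ] [Nonempty Ξ] (S : RSSetup Ξ)

noncomputable def MM (n : ℕ) (r : ℝ) : ℝ :=
  Finset.univ.sup' Finset.univ_nonempty fun ξ => S.Q n ξ S.cmin r

noncomputable def mm (n : ℕ) (r : ℝ) : ℝ :=
  Finset.univ.inf' Finset.univ_nonempty fun ξ => S.Q n ξ S.cmax r

lemma cmin_mem : S.cmin ∈ Icc S.cmin S.cmax := ⟨le_rfl, S.hlt.le⟩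
lemma cmax_mem : S.cmax ∈ Icc S.cmin S.cmax := ⟨S.hlt.le, le_rfl⟩

lemma Q_le_MM (n r) : ∀ ξ, ∀ c ∈ Icc S.cmin S.cmax, S.Q n ξ c r ≤ S.MM n r := by
  intro ξ c hc
  rw [MM]
  exact le_trans (S.Q_anti_c n ξ r hc.1)
    (Finset.le_sup' (fun ξ => S.Q n ξ S.cmin r) (Finset.mem_univ ξ))

lemma mm_le_Q (n r) : ∀ ξ, ∀ c ∈ Icc S.cmin S.cmax, S.mm n r ≤ S.Q n ξ c r := by
  intro ξ c hc
  rw [mm]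
  exact le_trans (Finset.inf'_le (fun ξ => S.Q n ξ S.cmax r) (Finset.mem_univ ξ))
    (S.Q_anti_c n ξ r hc.2)

lemma mm_le_MM (n r) : S.mm n r ≤ S.MM n r :=
  le_trans (S.mm_le_Q n r (Classical.arbitrary Ξ) S.cmin S.cmin_mem)
    (S.Q_le_MM n r (Classical.arbitrary Ξ) S.cmin S.cmin_mem)

lemma MM_le_one (n r) : S.MM n r ≤ 1 := by
  rw [MM, Finset.sup'_le_iff]
  exact fun ξ _ => S.Q_le_one n ξ S.cmin r

lemma mm_nonneg (n r) : 0 ≤ S.mm n r := by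
  rw [mm, Finset.le_inf'_iff]
  exact fun ξ _ => S.Q_nonneg n ξ S.cmax r

/-- convex combination upper bound -/
lemma convex_ub {w x : Ξ → ℝ} (hw : ∀ a, 0 ≤ w a) {M : ℝ} (hx : ∀ a, x a ≤ M) :
    ∑ a, w a * x a ≤ (∑ a, w a) * M := by
  rw [Finset.sum_mul]
  exact Finset.sum_le_sum fun a _ => mul_le_mul_of_nonneg_left (hx a) (hw a)

lemma convex_lb {w x : Ξ → ℝ} (hw : ∀ a, 0 ≤ w a) {M : ℝ} (hx : ∀ a, M ≤ x a) :
    (∑ a, w a) * M ≤ ∑ a, w a * x a := by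
  rw [Finset.sum_mul]
  exact Finset.sum_le_sum fun a _ => mul_le_mul_of_nonneg_left (hx a) (hw a)

lemma Q_succ_bounds (n r) : ∀ ξ, ∀ c ∈ Icc S.cmin S.cmax,
    S.mm n r ≤ S.Q (n+1) ξ c r ∧ S.Q (n+1) ξ c r ≤ S.MM n r := by
  intro ξ c hc
  have h1 : S.Q (n+1) ξ c r = ∑ a, S.pR ξ a * S.Q n a (S.f c ξ) r := rfl
  constructor
  · rw [h1]
    have := convex_lb (x := fun a => S.Q n a (S.f c ξ) r) (S.hpR' ξ)
      (fun a => S.mm_le_Q n r a _ (S.hrange ξ c hc))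
    rwa [S.hsum ξ, one_mul] at this
  · rw [h1]
    have := convex_ub (x := fun a => S.Q n a (S.f c ξ) r) (S.hpR' ξ)
      (fun a => S.Q_le_MM n r a _ (S.hrange ξ c hc))
    rwa [S.hsum ξ, one_mul] at this

lemma MM_anti (r) : ∀ n, S.MM (n+1) r ≤ S.MM n r := by
  intro n
  obtain ⟨ξ₁, _, hξ₁⟩ := Finset.exists_mem_eq_sup' (Finset.univ_nonempty (α := Ξ))
    (fun ξ => S.Q (n+1) ξ S.cmin r)
  have h : S.MM (n+1) r = S.Q (n+1) ξ₁ S.cmin r := hξ₁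
  rw [h]
  exact (S.Q_succ_bounds n r ξ₁ S.cmin S.cmin_mem).2

lemma mm_mono (r) : ∀ n, S.mm n r ≤ S.mm (n+1) r := by
  intro n
  obtain ⟨ξ₁, _, hξ₁⟩ := Finset.exists_mem_eq_inf' (Finset.univ_nonempty (α := Ξ))
    (fun ξ => S.Q (n+1) ξ S.cmax r)
  have h : S.mm (n+1) r = S.Q (n+1) ξ₁ S.cmax r := hξ₁
  rw [h]
  exact (S.Q_succ_bounds n r ξ₁ S.cmax S.cmax_mem).1

lemma MM_anti' (r) : ∀ {m n : ℕ}, n ≤ m → S.MM m r ≤ S.MM n r := by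
  intro m n h
  induction m with
  | zero => rw [Nat.le_zero.1 h]
  | succ m ih =>
    rcases Nat.lt_or_ge n (m+1) with h' | h'
    · exact (S.MM_anti r m).trans (ih (Nat.lt_succ_iff.1 h'))
    · rw [le_antisymm h h']

lemma mm_mono' (r) : ∀ {m n : ℕ}, n ≤ m → S.mm n r ≤ S.mm m r := by
  intro m n h
  induction m with
  | zero => rw [Nat.le_zero.1 h]
  | succ m ih =>
    rcases Nat.lt_or_ge n (m+1) with h' | h'
    · exact (ih (Nat.lt_succ_iff.1 h')).trans (S.mm_mono r m)
    · rw [le_antisymm h h']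

/-- uniform sandwich: for `m ≥ n` all the `Q m` values lie between `mm n` and `MM n`. -/
lemma Q_sandwich (r) : ∀ {m n : ℕ}, n ≤ m → ∀ ξ, ∀ c ∈ Icc S.cmin S.cmax,
    S.mm n r ≤ S.Q m ξ c r ∧ S.Q m ξ c r ≤ S.MM n r := by
  intro m n h ξ c hc
  rcases h.eq_or_lt with rfl | hlt'
  · exact ⟨S.mm_le_Q n r ξ c hc, S.Q_le_MM n r ξ c hc⟩
  · obtain ⟨k, rfl⟩ := Nat.exists_eq_add_of_le (Nat.succ_le_of_lt hlt')
    have hnk : n ≤ n + k := Nat.le_add_right n k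
    simp only [Nat.succ_add]
    constructor
    · exact le_trans (S.mm_mono' r hnk) ((S.Q_succ_bounds (n+k) r ξ c hc).1)
    · exact le_trans ((S.Q_succ_bounds (n+k) r ξ c hc).2) (S.MM_anti' r hnk)

noncomputable def delta : ℝ :=
  Finset.univ.inf' Finset.univ_nonempty fun q : Ξ × Ξ => S.pR q.1 q.2

lemma delta_pos : 0 < S.delta := by
  rw [delta, Finset.lt_inf'_iff]
  exact fun q _ => S.hpR q.1 q.2

lemma delta_le (ξ a : Ξ) : S.delta ≤ S.pR ξ a :=
  Finset.inf'_le _ (Finset.mem_univ (ξ, a))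

lemma delta_le_one : S.delta ≤ 1 := by
  have h1 : S.delta ≤ S.pR (Classical.arbitrary Ξ) (Classical.arbitrary Ξ) := S.delta_le _ _
  have h2 : S.pR (Classical.arbitrary Ξ) (Classical.arbitrary Ξ) ≤ 1 := by
    rw [← S.hsum (Classical.arbitrary Ξ)]
    exact Finset.single_le_sum (fun a _ => S.hpR' _ a) (Finset.mem_univ _)
  linarith

end RSSetup

namespace RSSetup

variable {Ξ : Type} [Fintype Ξ] [Nonempty Ξ] (S : RSSetup Ξ)

lemma Q_two_step (n : ℕ) (r : ℝ) (ξ : Ξ) (c : ℝ) :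
    S.Q (n+2) ξ c r = ∑ a, S.pR ξ a * ∑ b, S.pR a b * S.Q n b (S.f (S.f c ξ) a) r := rfl

/-- The key Doeblin minorization estimate. -/
lemma doeblin_bound (n : ℕ) (r : ℝ) {ξs : Ξ} (hξs : ∀ c ∈ Icc S.cmin S.cmax, S.f c ξs = S.cmin) :
    ∀ ξ, ∀ c ∈ Icc S.cmin S.cmax,
      S.delta * (∑ b, S.pR ξs b * S.Q n b S.cmin r) + (1 - S.delta) * S.mm n r
        ≤ S.Q (n+2) ξ c r ∧
      S.Q (n+2) ξ c r ≤
        S.delta * (∑ b, S.pR ξs b * S.Q n b S.cmin r) + (1 - S.delta) * S.MM n r := by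
  classical
  intro ξ c hc
  set A : ℝ := ∑ b, S.pR ξs b * S.Q n b S.cmin r with hA
  set G : Ξ → ℝ := fun a => ∑ b, S.pR a b * S.Q n b (S.f (S.f c ξ) a) r with hG
  have hfc : S.f c ξ ∈ Icc S.cmin S.cmax := S.hrange ξ c hc
  have hGmem : ∀ a, S.mm n r ≤ G a ∧ G a ≤ S.MM n r := by
    intro a
    constructor
    · have := convex_lb (x := fun b => S.Q n b (S.f (S.f c ξ) a) r) (S.hpR' a)
        (fun b => S.mm_le_Q n r b _ (S.hrange a _ hfc))
      rwa [S.hsum a, one_mul] at this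
    · have := convex_ub (x := fun b => S.Q n b (S.f (S.f c ξ) a) r) (S.hpR' a)
        (fun b => S.Q_le_MM n r b _ (S.hrange a _ hfc))
      rwa [S.hsum a, one_mul] at this
  have hGs : G ξs = A := by
    rw [hG, hA]
    simp only [hξs (S.f c ξ) hfc]
  set w : Ξ → ℝ := fun a => S.pR ξ a - (if a = ξs then S.delta else 0) with hw
  have hwa : ∀ a, w a = S.pR ξ a - (if a = ξs then S.delta else 0) := fun a => rfl
  have hw0 : ∀ a, 0 ≤ w a := by
    intro a
    rw [hwa]
    split_ifs with h
    · subst h; linarith [S.delta_le ξ a]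
    · simp only [sub_zero]; exact S.hpR' ξ a
  have hwsum : ∑ a, w a = 1 - S.delta := by
    simp only [hwa]
    rw [Finset.sum_sub_distrib, S.hsum ξ, Finset.sum_ite_eq' Finset.univ ξs fun _ => S.delta]
    simp
  have hsplit : S.Q (n+2) ξ c r = (∑ a, w a * G a) + S.delta * A := by
    rw [S.Q_two_step]
    have : ∀ a ∈ Finset.univ, S.pR ξ a * G a
        = w a * G a + (if a = ξs then S.delta * G a else 0) := by
      intro a _
      rw [hwa]
      split_ifs <;> ring
    calc ∑ a, S.pR ξ a * (∑ b, S.pR a b * S.Q n b (S.f (S.f c ξ) a) r)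
        = ∑ a, S.pR ξ a * G a := rfl
      _ = ∑ a, (w a * G a + (if a = ξs then S.delta * G a else 0)) :=
          Finset.sum_congr rfl this
      _ = (∑ a, w a * G a) + ∑ a, (if a = ξs then S.delta * G a else 0) :=
          Finset.sum_add_distrib
      _ = (∑ a, w a * G a) + S.delta * G ξs := by
          rw [Finset.sum_ite_eq' Finset.univ ξs fun a => S.delta * G a]
          simp
      _ = (∑ a, w a * G a) + S.delta * A := by rw [hGs]
  constructor
  · rw [hsplit]
    have := convex_lb (x := G) hw0 (fun a => (hGmem a).1)
    rw [hwsum] at this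
    linarith
  · rw [hsplit]
    have := convex_ub (x := G) hw0 (fun a => (hGmem a).2)
    rw [hwsum] at this
    linarith

lemma doeblin (n : ℕ) (r : ℝ) {ξs : Ξ} (hξs : ∀ c ∈ Icc S.cmin S.cmax, S.f c ξs = S.cmin) :
    S.MM (n+2) r - S.mm (n+2) r ≤ (1 - S.delta) * (S.MM n r - S.mm n r) := by
  obtain ⟨ξ₁, _, hξ₁⟩ := Finset.exists_mem_eq_sup' (Finset.univ_nonempty (α := Ξ))
    (fun ξ => S.Q (n+2) ξ S.cmin r)
  obtain ⟨ξ₂, _, hξ₂⟩ := Finset.exists_mem_eq_inf' (Finset.univ_nonempty (α := Ξ))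
    (fun ξ => S.Q (n+2) ξ S.cmax r)
  have h1 : S.MM (n+2) r = S.Q (n+2) ξ₁ S.cmin r := hξ₁
  have h2 : S.mm (n+2) r = S.Q (n+2) ξ₂ S.cmax r := hξ₂
  rw [h1, h2]
  have b1 := (S.doeblin_bound n r hξs ξ₁ S.cmin S.cmin_mem).2
  have b2 := (S.doeblin_bound n r hξs ξ₂ S.cmax S.cmax_mem).1
  linarith

lemma width_le (r : ℝ) : ∀ n, S.MM n r - S.mm n r ≤ (1 - S.delta) ^ (n / 2) := by
  have hξs := S.hstar
  obtain ⟨ξs, hξs⟩ := hξs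
  have hq0 : (0:ℝ) ≤ 1 - S.delta := by linarith [S.delta_le_one]
  intro n
  induction n using Nat.strong_induction_on with
  | _ n ih =>
    match n, ih with
    | 0, _ => simpa using by linarith [S.MM_le_one 0 r, S.mm_nonneg 0 r]
    | 1, _ => simpa using by linarith [S.MM_le_one 1 r, S.mm_nonneg 1 r]
    | (m+2), ih =>
      have h1 := S.doeblin m r hξs
      have h2 := ih m (by omega)
      have h3 : (1 - S.delta) * (S.MM m r - S.mm m r)
          ≤ (1 - S.delta) * (1 - S.delta) ^ (m / 2) := by
        exact mul_le_mul_of_nonneg_left h2 hq0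
      have h4 : (1 - S.delta) * (1 - S.delta) ^ (m / 2) = (1 - S.delta) ^ ((m+2) / 2) := by
        rw [← pow_succ']
        congr 1
        omega
      linarith

end RSSetup

namespace RSSetup

variable {Ξ : Type} [Fintype Ξ] [Nonempty Ξ] (S : RSSetup Ξ)

noncomputable def Glim (r : ℝ) : ℝ := ⨆ n, S.mm n r

lemma mm_bdd (r : ℝ) : BddAbove (Set.range fun n => S.mm n r) := by
  refine ⟨1, ?_⟩
  rintro x ⟨n, rfl⟩
  exact le_trans (S.mm_le_MM n r) (S.MM_le_one n r)

lemma mm_le_Glim (n : ℕ) (r : ℝ) : S.mm n r ≤ S.Glim r := le_ciSup (S.mm_bdd r) n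

lemma Glim_le_MM (n : ℕ) (r : ℝ) : S.Glim r ≤ S.MM n r := by
  refine ciSup_le fun k => ?_
  rcases le_total k n with h | h
  · exact le_trans (S.mm_mono' r h) (S.mm_le_MM n r)
  · exact le_trans (S.mm_le_MM k r) (S.MM_anti' r h)

lemma Q_close (n : ℕ) (r : ℝ) (ξ : Ξ) {c : ℝ} (hc : c ∈ Icc S.cmin S.cmax) :
    |S.Q n ξ c r - S.Glim r| ≤ (1 - S.delta) ^ (n / 2) := by
  have h1 := S.mm_le_Q n r ξ c hc
  have h2 := S.Q_le_MM n r ξ c hc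
  have h3 := S.mm_le_Glim n r
  have h4 := S.Glim_le_MM n r
  have h5 := S.width_le r n
  rw [abs_le]
  constructor <;> linarith

lemma Glim_nonneg (r : ℝ) : 0 ≤ S.Glim r :=
  le_trans (S.mm_nonneg 0 r) (S.mm_le_Glim 0 r)

lemma Glim_le_one (r : ℝ) : S.Glim r ≤ 1 :=
  le_trans (S.Glim_le_MM 0 r) (S.MM_le_one 0 r)

lemma Glim_mono : Monotone S.Glim := by
  intro r r' h
  refine ciSup_mono (S.mm_bdd r') fun n => ?_
  rw [mm, mm, Finset.le_inf'_iff]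
  intro ξ _
  exact le_trans (Finset.inf'_le (fun ξ => S.Q n ξ S.cmax r) (Finset.mem_univ ξ))
    (S.Q_mono_r n ξ S.cmax h)

lemma Glim_eq_zero {r : ℝ} (h : r < S.cmin) : S.Glim r = 0 := by
  have : ∀ n, S.mm n r = 0 := by
    intro n
    rw [mm]
    have : ∀ ξ ∈ Finset.univ, S.Q n ξ S.cmax r = (fun _ : Ξ => (0:ℝ)) ξ := by
      intro ξ _
      exact S.Q_eq_zero n ξ S.cmax S.cmax_mem r h
    rw [Finset.inf'_congr _ rfl this]
    simp
  rw [Glim]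
  simp only [this]
  exact ciSup_const

lemma Glim_eq_one {r : ℝ} (h : S.cmax ≤ r) : S.Glim r = 1 := by
  have : ∀ n, S.mm n r = 1 := by
    intro n
    rw [mm]
    have : ∀ ξ ∈ Finset.univ, S.Q n ξ S.cmax r = (fun _ : Ξ => (1:ℝ)) ξ := by
      intro ξ _
      exact S.Q_eq_one n ξ S.cmax S.cmax_mem r h
    rw [Finset.inf'_congr _ rfl this]
    simp
  rw [Glim]
  simp only [this]
  exact ciSup_const

lemma q_lt_one : 1 - S.delta < 1 := by linarith [S.delta_pos]

lemma q_nonneg : (0:ℝ) ≤ 1 - S.delta := by linarith [S.delta_le_one]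

/-- the power `(1-δ)^(n/2)` tends to `0`. -/
lemma rate_tendsto : Tendsto (fun n : ℕ => (1 - S.delta) ^ (n / 2)) atTop (nhds 0) := by
  have h := tendsto_pow_atTop_nhds_zero_of_lt_one S.q_nonneg S.q_lt_one
  exact h.comp (Filter.tendsto_atTop_atTop.2 fun b => ⟨2 * b, fun a ha => by omega⟩)

lemma Glim_rc (r : ℝ) : ContinuousWithinAt S.Glim (Ici r) r := by
  rw [Metric.continuousWithinAt_iff]
  intro ε hε
  obtain ⟨n, hn⟩ := (Filter.tendsto_atTop'.1 S.rate_tendsto (Iio (ε/4)) (Iio_mem_nhds (by positivity))) 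
  have hrate : (1 - S.delta) ^ (n / 2) < ε / 4 := hn n le_rfl
  set ξb := Classical.arbitrary Ξ
  obtain ⟨h, hh, hspec⟩ := S.Q_loc_const n ξb S.cmin r
  refine ⟨h, hh, fun s hs hds => ?_⟩
  have hsr : r ≤ s := hs
  have hsr' : s < r + h := by
    rw [Real.dist_eq, abs_lt] at hds
    linarith [hds.2]
  have e1 := S.Q_close n r ξb S.cmin_mem
  have e2 := S.Q_close n s ξb S.cmin_mem
  have e3 := hspec s hsr hsr'
  rw [Real.dist_eq]
  rw [abs_le] at e1 e2
  rw [abs_lt]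
  constructor <;> linarith [e1.1, e1.2, e2.1, e2.2]

lemma Glim_tendsto_atBot : Tendsto S.Glim atBot (nhds 0) := by
  have : S.Glim =ᶠ[atBot] fun _ => 0 := by
    filter_upwards [eventually_lt_atBot S.cmin] with r hr
    exact S.Glim_eq_zero hr
  rw [tendsto_congr' this]
  exact tendsto_const_nhds

lemma Glim_tendsto_atTop : Tendsto S.Glim atTop (nhds 1) := by
  have : S.Glim =ᶠ[atTop] fun _ => 1 := by
    filter_upwards [eventually_ge_atTop S.cmax] with r hr
    exact S.Glim_eq_one hr
  rw [tendsto_congr' this]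
  exact tendsto_const_nhds

/-- The limiting CDF as a Stieltjes function. -/
noncomputable def GS : StieltjesFunction ℝ where
  toFun := S.Glim
  mono' := S.Glim_mono
  right_continuous' := S.Glim_rc

noncomputable def pilim : Measure ℝ := S.GS.measure

lemma pilim_Iic (r : ℝ) : S.pilim (Iic r) = ENNReal.ofReal (S.Glim r) := by
  rw [pilim, S.GS.measure_Iic S.Glim_tendsto_atBot r, sub_zero]
  rfl

instance : IsProbabilityMeasure S.pilim := by
  constructor
  rw [pilim, S.GS.measure_univ S.Glim_tendsto_atBot S.Glim_tendsto_atTop]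
  norm_num

lemma Glim_leftLim : Function.leftLim S.Glim S.cmin = 0 := by
  refine leftLim_eq_of_tendsto ?_
  have : ∀ᶠ x in nhdsWithin S.cmin (Iio S.cmin), S.Glim x = 0 := by
    filter_upwards [self_mem_nhdsWithin] with x hx
    exact S.Glim_eq_zero hx
  rw [tendsto_congr' this]
  exact tendsto_const_nhds

lemma pilim_Icc : S.pilim (Icc S.cmin S.cmax) = 1 := by
  rw [pilim, S.GS.measure_Icc]
  have h1 : S.GS S.cmax = 1 := S.Glim_eq_one le_rfl
  have h2 : Function.leftLim (S.GS : ℝ → ℝ) S.cmin = 0 := S.Glim_leftLim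
  rw [h1, h2]
  norm_num

end RSSetup

section Key

variable {Ξ : Type} [Fintype Ξ] [Nonempty Ξ]

lemma meas_inter_of_one {Ω : Type} [MeasurableSpace Ω] (μ : Measure Ω)
    [IsProbabilityMeasure μ] {A : Set Ω} (hA : MeasurableSet A) (h1 : μ A = 1)
    (B : Set Ω) : μ (B ∩ A) = μ B := by
  have hcompl : μ Aᶜ = 0 := by
    rw [measure_compl hA (measure_ne_top μ A), h1, measure_univ, tsub_self]
  have hd : μ (B \ A) = 0 := measure_mono_null (diff_subset_compl B A) hcompl
  have h2 := measure_inter_add_diff (μ := μ) B hA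
  rw [hd, add_zero] at h2
  exact h2

lemma partition_sum {Ω : Type} [MeasurableSpace Ω] [MeasurableSpace Ξ]
    [MeasurableSingletonClass Ξ] (μ : Measure Ω) {g : Ω → Ξ} (hg : Measurable g)
    (B : Set Ω) : μ B = ∑ a, μ (B ∩ g ⁻¹' {a}) := by
  classical
  have key : ∀ s : Finset Ξ, μ (B ∩ g ⁻¹' ↑s) = ∑ a ∈ s, μ (B ∩ g ⁻¹' {a}) := by
    intro s
    induction s using Finset.induction_on with
    | empty => simp
    | @insert a s ha ih =>
      have hsplit := measure_inter_add_diff (μ := μ) (B ∩ g ⁻¹' ↑(insert a s))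
        (hg (measurableSet_singleton a))
      have e1 : B ∩ g ⁻¹' ↑(insert a s) ∩ g ⁻¹' {a} = B ∩ g ⁻¹' {a} := by
        ext ω
        simp only [Set.mem_inter_iff, Set.mem_preimage, Finset.coe_insert,
          Set.mem_insert_iff, Finset.mem_coe, Set.mem_singleton_iff]
        tauto
      have e2 : (B ∩ g ⁻¹' ↑(insert a s)) \ g ⁻¹' {a} = B ∩ g ⁻¹' ↑s := by
        ext ω
        simp only [Set.mem_diff, Set.mem_inter_iff, Set.mem_preimage, Finset.coe_insert,
          Set.mem_insert_iff, Finset.mem_coe, Set.mem_singleton_iff]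
        constructor
        · rintro ⟨⟨hB, h1 | h1⟩, h2⟩
          · exact absurd h1 h2
          · exact ⟨hB, h1⟩
        · rintro ⟨hB, h1⟩
          exact ⟨⟨hB, Or.inr h1⟩, fun h => ha (h ▸ h1)⟩
      rw [e1, e2] at hsplit
      rw [Finset.sum_insert ha, ← ih, ← hsplit]
  have := key Finset.univ
  simpa using this

variable [MeasurableSpace Ξ] [MeasurableSingletonClass Ξ]

lemma key_lemma (S : RSSetup Ξ) (p : Ξ → Ξ → ENNReal)
    (hp : ∀ ξ a, p ξ a = ENNReal.ofReal (S.pR ξ a)) (n : ℕ) :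
    ∀ (Ω : Type) (mΩ : MeasurableSpace Ω) (Pr : Measure Ω), IsProbabilityMeasure Pr →
    ∀ (Z : ℕ → Ω → Ξ), (∀ t, Measurable (Z t)) → IsMarkovChain Pr p Z →
    ∀ ξ₀ : Ξ, Pr {ω | Z 0 ω = ξ₀} = 1 →
    ∀ (c₀ : ℝ) (c : ℕ → Ω → ℝ) (A : Set Ω), MeasurableSet A → Pr A = 1 →
      (∀ ω ∈ A, c 0 ω = c₀) →
      (∀ t ω, c (t + 1) ω = S.f (c t ω) (Z t ω)) →
    ∀ r : ℝ, Pr {ω | c (n+1) ω ≤ r} = ENNReal.ofReal (S.Q n ξ₀ c₀ r) := by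
  have hpne0 : ∀ ξ a, p ξ a ≠ 0 := by
    intro ξ a
    rw [hp]
    simp only [ne_eq, ENNReal.ofReal_eq_zero, not_le]
    exact S.hpR ξ a
  have hpnetop : ∀ ξ a, p ξ a ≠ ⊤ := fun ξ a => by rw [hp]; exact ENNReal.ofReal_ne_top
  induction n with
  | zero =>
    intro Ω mΩ Pr hPr Z hZ hM ξ₀ hξ₀ c₀ c A hAm hA1 hc0 hcrec r
    have hZ0m : MeasurableSet {ω | Z 0 ω = ξ₀} := hZ 0 (measurableSet_singleton ξ₀)
    set T := A ∩ {ω | Z 0 ω = ξ₀} with hT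
    have hTm : MeasurableSet T := hAm.inter hZ0m
    have hT1 : Pr T = 1 := by
      rw [hT, meas_inter_of_one Pr hZ0m hξ₀ A, hA1]
    have hval : ∀ ω ∈ T, c 1 ω = S.f c₀ ξ₀ := by
      rintro ω ⟨hωA, hωZ⟩
      rw [hcrec 0 ω, hc0 ω hωA, hωZ]
    rw [← meas_inter_of_one Pr hTm hT1 {ω | c 1 ω ≤ r}]
    by_cases hle : S.f c₀ ξ₀ ≤ r
    · have : {ω | c 1 ω ≤ r} ∩ T = T := by
        refine Set.inter_eq_right.2 fun ω hω => ?_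
        simp only [Set.mem_setOf_eq, hval ω hω]
        exact hle
      rw [this, hT1]
      simp [RSSetup.Q, hle]
    · have : {ω | c 1 ω ≤ r} ∩ T = ∅ := by
        refine Set.eq_empty_of_forall_notMem fun ω hω => ?_
        have h1 := hω.1
        simp only [Set.mem_setOf_eq, hval ω hω.2] at h1
        exact hle h1
      rw [this]
      simp [RSSetup.Q, hle]
  | succ n IH =>
    intro Ω mΩ Pr hPr Z hZ hM ξ₀ hξ₀ c₀ c A hAm hA1 hc0 hcrec r
    have hZ0m : MeasurableSet {ω | Z 0 ω = ξ₀} := hZ 0 (measurableSet_singleton ξ₀)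
    have main : ∀ a : Ξ, Pr ({ω | c (n+1+1) ω ≤ r} ∩ {ω | Z 1 ω = a})
        = p ξ₀ a * ENNReal.ofReal (S.Q n a (S.f c₀ ξ₀) r) := by
      intro a
      have hZ1m : MeasurableSet {ω | Z 1 ω = a} := hZ 1 (measurableSet_singleton a)
      -- probability of {Z 1 = a}
      have hE1 : Pr ({ω | Z 0 ω = ξ₀} ∩ {ω | Z 1 ω = a}) = p ξ₀ a := by
        have hMk := hM 0 (fun j => if j = 0 then ξ₀ else a)
        simp only [Nat.zero_add] at hMk
        have e0 : {ω | ∀ j ≤ 0, Z j ω = if j = 0 then ξ₀ else a} = {ω | Z 0 ω = ξ₀} := by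
          ext ω
          simp only [Set.mem_setOf_eq]
          constructor
          · intro h; have := h 0 le_rfl; simpa using this
          · intro h j hj
            have : j = 0 := Nat.le_zero.1 hj
            subst this; simpa using h
        have e1 : {ω | ∀ j ≤ 1, Z j ω = if j = 0 then ξ₀ else a}
            = {ω | Z 0 ω = ξ₀} ∩ {ω | Z 1 ω = a} := by
          ext ω
          simp only [Set.mem_setOf_eq, Set.mem_inter_iff]
          constructor
          · intro h
            refine ⟨by simpa using h 0 (by omega), by simpa using h 1 le_rfl⟩
          · rintro ⟨h0, h1⟩ j hj
            interval_cases j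
            · simpa using h0
            · simpa using h1
        rw [e0, e1, hξ₀, one_mul] at hMk
        simpa using hMk
      have hZ1a : Pr {ω | Z 1 ω = a} = p ξ₀ a := by
        rw [← meas_inter_of_one Pr hZ0m hξ₀ {ω | Z 1 ω = a}, Set.inter_comm, hE1]
      -- the conditional measure
      set Pra : Measure Ω := (p ξ₀ a)⁻¹ • Pr.restrict {ω | Z 1 ω = a} with hPra
      have hPra_apply : ∀ B : Set Ω, Pra B = (p ξ₀ a)⁻¹ * Pr (B ∩ {ω | Z 1 ω = a}) := by
        intro B
        rw [hPra, Measure.smul_apply, Measure.restrict_apply' hZ1m, smul_eq_mul]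
      have recover : ∀ B : Set Ω, Pr (B ∩ {ω | Z 1 ω = a}) = p ξ₀ a * Pra B := by
        intro B
        rw [hPra_apply, ← mul_assoc, ENNReal.mul_inv_cancel (hpne0 ξ₀ a) (hpnetop ξ₀ a),
          one_mul]
      have hPraP : IsProbabilityMeasure Pra := by
        constructor
        rw [hPra_apply, Set.univ_inter, hZ1a,
          ENNReal.inv_mul_cancel (hpne0 ξ₀ a) (hpnetop ξ₀ a)]
      -- event translation helper
      have claim : ∀ (w : ℕ → Ξ), w 0 = a → ∀ m : ℕ,
          Pr ({ω | ∀ j ≤ m, Z (j+1) ω = w j} ∩ {ω | Z 1 ω = a})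
            = Pr {ω | ∀ j ≤ m + 1, Z j ω = (fun j => if j = 0 then ξ₀ else w (j-1)) j} := by
        intro w hw0 m
        have step1 : {ω | ∀ j ≤ m, Z (j+1) ω = w j} ∩ {ω | Z 1 ω = a}
            = {ω | ∀ j ≤ m, Z (j+1) ω = w j} := by
          refine Set.inter_eq_left.2 fun ω hω => ?_
          have := hω 0 (Nat.zero_le m)
          simp only [Set.mem_setOf_eq]
          rw [← hw0]
          exact this
        have step2 : {ω | ∀ j ≤ m, Z (j+1) ω = w j} ∩ {ω | Z 0 ω = ξ₀}
            = {ω | ∀ j ≤ m + 1, Z j ω = (fun j => if j = 0 then ξ₀ else w (j-1)) j} := by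
          ext ω
          simp only [Set.mem_setOf_eq, Set.mem_inter_iff]
          constructor
          · rintro ⟨h1, h2⟩ j hj
            match j with
            | 0 => simpa using h2
            | (k+1) =>
              have hk : k ≤ m := by omega
              simpa using h1 k hk
          · intro h
            constructor
            · intro j hj
              have := h (j+1) (by omega)
              simpa using this
            · simpa using h 0 (by omega)
        rw [step1, ← meas_inter_of_one Pr hZ0m hξ₀ {ω | ∀ j ≤ m, Z (j+1) ω = w j}, step2]
      -- Markov property for the shifted chain
      have hM' : IsMarkovChain Pra p (fun t ω => Z (t+1) ω) := by
        intro t w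
        by_cases hw0 : w 0 = a
        · rw [hPra_apply, hPra_apply, claim w hw0 (t+1), claim w hw0 t]
          rw [hM (t+1) (fun j => if j = 0 then ξ₀ else w (j-1))]
          have i1 : (if t + 1 + 1 = 0 then ξ₀ else w (t + 1 + 1 - 1)) = w (t+1) := by
            simp
          have i2 : (if t + 1 = 0 then ξ₀ else w (t + 1 - 1)) = w t := by
            simp
          rw [i1, i2]
          ring
        · have he : ∀ m : ℕ, {ω | ∀ j ≤ m, Z (j+1) ω = w j} ∩ {ω | Z 1 ω = a} = ∅ := by
            intro m
            refine Set.eq_empty_of_forall_notMem fun ω hω => ?_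
            have h1 := hω.1 0 (Nat.zero_le m)
            have h2 := hω.2
            simp only [Set.mem_setOf_eq] at h1 h2
            exact hw0 (h1 ▸ h2)
          rw [hPra_apply, hPra_apply, he (t+1), he t]
          simp
      -- initial state of the shifted chain
      have hξ' : Pra {ω | Z 1 ω = a} = 1 := by
        rw [hPra_apply, Set.inter_self, hZ1a,
          ENNReal.inv_mul_cancel (hpne0 ξ₀ a) (hpnetop ξ₀ a)]
      -- initial value set
      have hA'1 : Pra (A ∩ {ω | Z 0 ω = ξ₀}) = 1 := by
        rw [hPra_apply]
        have : A ∩ {ω | Z 0 ω = ξ₀} ∩ {ω | Z 1 ω = a}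
            = ({ω | Z 0 ω = ξ₀} ∩ {ω | Z 1 ω = a}) ∩ A := by
          ext ω; simp only [Set.mem_inter_iff]; tauto
        rw [this, meas_inter_of_one Pr hAm hA1, hE1,
          ENNReal.inv_mul_cancel (hpne0 ξ₀ a) (hpnetop ξ₀ a)]
      have hc0' : ∀ ω ∈ A ∩ {ω | Z 0 ω = ξ₀}, c 1 ω = S.f c₀ ξ₀ := by
        rintro ω ⟨hωA, hωZ⟩
        rw [hcrec 0 ω, hc0 ω hωA, hωZ]
      have hIH := IH Ω mΩ Pra hPraP (fun t ω => Z (t+1) ω) (fun t => hZ (t+1)) hM' a hξ'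
        (S.f c₀ ξ₀) (fun t ω => c (t+1) ω) (A ∩ {ω | Z 0 ω = ξ₀})
        (hAm.inter hZ0m) hA'1 hc0' (fun t ω => hcrec (t+1) ω) r
      rw [recover {ω | c (n+1+1) ω ≤ r}]
      rw [show Pra {ω | c (n+1+1) ω ≤ r} = Pra {ω | c (n+1+1) ω ≤ r} from rfl]
      rw [show ({ω | c (n+1+1) ω ≤ r} : Set Ω) = {ω | (fun t ω => c (t+1) ω) (n+1) ω ≤ r}
        from rfl] at *
      rw [hIH]
    have hsum : Pr {ω | c (n+1+1) ω ≤ r} = ∑ a, Pr ({ω | c (n+1+1) ω ≤ r} ∩ {ω | Z 1 ω = a}) := by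
      have := partition_sum Pr (hZ 1) {ω | c (n+1+1) ω ≤ r}
      exact this
    rw [hsum]
    have : ∀ a ∈ Finset.univ, Pr ({ω | c (n+1+1) ω ≤ r} ∩ {ω | Z 1 ω = a})
        = ENNReal.ofReal (S.pR ξ₀ a * S.Q n a (S.f c₀ ξ₀) r) := by
      intro a _
      rw [main a, hp, ← ENNReal.ofReal_mul (S.hpR' ξ₀ a)]
    rw [Finset.sum_congr rfl this, ← ENNReal.ofReal_sum_of_nonneg]
    · rfl
    · intro a _
      exact mul_nonneg (S.hpR' ξ₀ a) (S.Q_nonneg n a (S.f c₀ ξ₀) r)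

end Key

section Chain

variable {Ξ : Type} [Fintype Ξ] [Nonempty Ξ]

open Classical in
/-- cumulative transition function: total mass of states enumerated before `k`. -/
noncomputable def cum (pR : Ξ → Ξ → ℝ) (s : Ξ) (k : ℕ) : ℝ :=
  ∑ ξ' ∈ Finset.univ.filter (fun ξ' => ((Fintype.equivFin Ξ) ξ' : ℕ) < k), pR s ξ'

variable (pR : Ξ → Ξ → ℝ)

lemma cum_zero (s : Ξ) : cum pR s 0 = 0 := by
  simp [cum]

lemma cum_mono (hpR : ∀ ξ a, 0 ≤ pR ξ a) (s : Ξ) {k k' : ℕ} (h : k ≤ k') :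
    cum pR s k ≤ cum pR s k' := by
  classical
  refine Finset.sum_le_sum_of_subset_of_nonneg ?_ fun ξ' _ _ => hpR s ξ'
  intro ξ' hξ'
  simp only [Finset.mem_filter, Finset.mem_univ, true_and] at hξ' ⊢
  omega

lemma cum_card (hsum : ∀ s, ∑ a, pR s a = 1) (s : Ξ) : cum pR s (Fintype.card Ξ) = 1 := by
  classical
  rw [cum]
  have : Finset.univ.filter (fun ξ' : Ξ => ((Fintype.equivFin Ξ) ξ' : ℕ) < Fintype.card Ξ)
      = Finset.univ := by
    refine Finset.filter_true_of_mem fun ξ' _ => ?_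
    exact ((Fintype.equivFin Ξ) ξ').isLt
  rw [this]
  exact hsum s

lemma cum_nonneg (hpR : ∀ ξ a, 0 ≤ pR ξ a) (s : Ξ) (k : ℕ) : 0 ≤ cum pR s k :=
  Finset.sum_nonneg fun ξ' _ => hpR s ξ'

lemma cum_le_one (hpR : ∀ ξ a, 0 ≤ pR ξ a) (hsum : ∀ s, ∑ a, pR s a = 1) (s : Ξ) (k : ℕ) :
    cum pR s k ≤ 1 := by
  classical
  rw [← hsum s]
  exact Finset.sum_le_sum_of_subset_of_nonneg (Finset.filter_subset _ _)
    fun ξ' _ _ => hpR s ξ'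

lemma cum_succ (s ξ' : Ξ) :
    cum pR s (((Fintype.equivFin Ξ) ξ' : ℕ) + 1)
      = cum pR s ((Fintype.equivFin Ξ) ξ') + pR s ξ' := by
  classical
  rw [cum, cum]
  have hins : Finset.univ.filter
        (fun a : Ξ => ((Fintype.equivFin Ξ) a : ℕ) < ((Fintype.equivFin Ξ) ξ' : ℕ) + 1)
      = insert ξ' (Finset.univ.filter
        (fun a : Ξ => ((Fintype.equivFin Ξ) a : ℕ) < (Fintype.equivFin Ξ) ξ')) := by
    ext a
    simp only [Finset.mem_filter, Finset.mem_univ, true_and, Finset.mem_insert]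
    constructor
    · intro h
      rcases Nat.lt_succ_iff_lt_or_eq.1 h with h' | h'
      · exact Or.inr h'
      · left
        have : (Fintype.equivFin Ξ) a = (Fintype.equivFin Ξ) ξ' := Fin.ext h'
        exact (Fintype.equivFin Ξ).injective this
    · rintro (rfl | h)
      · omega
      · omega
  rw [hins, Finset.sum_insert (by simp)]
  ring

/-- selection of the successor state given a uniform sample `y`. -/
noncomputable def sel (s : Ξ) (y : ℝ) : Ξ :=
  if h : ∃ ξ', cum pR s ((Fintype.equivFin Ξ) ξ') ≤ y ∧
      y < cum pR s (((Fintype.equivFin Ξ) ξ' : ℕ) + 1) then h.choose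
  else Classical.arbitrary Ξ

lemma sel_unique (hpR : ∀ ξ a, 0 ≤ pR ξ a) {s : Ξ} {y : ℝ} {a b : Ξ}
    (ha : cum pR s ((Fintype.equivFin Ξ) a) ≤ y ∧
      y < cum pR s (((Fintype.equivFin Ξ) a : ℕ) + 1))
    (hb : cum pR s ((Fintype.equivFin Ξ) b) ≤ y ∧
      y < cum pR s (((Fintype.equivFin Ξ) b : ℕ) + 1)) : a = b := by
  by_contra hne
  have hvalne : ((Fintype.equivFin Ξ) a : ℕ) ≠ ((Fintype.equivFin Ξ) b : ℕ) := by
    intro h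
    exact hne ((Fintype.equivFin Ξ).injective (Fin.ext h))
  rcases Nat.lt_or_ge ((Fintype.equivFin Ξ) a : ℕ) ((Fintype.equivFin Ξ) b : ℕ) with h | h
  · have : cum pR s (((Fintype.equivFin Ξ) a : ℕ) + 1) ≤ cum pR s ((Fintype.equivFin Ξ) b) :=
      cum_mono pR hpR s (by omega)
    linarith [ha.2, hb.1]
  · have hlt : ((Fintype.equivFin Ξ) b : ℕ) < ((Fintype.equivFin Ξ) a : ℕ) := by omega
    have : cum pR s (((Fintype.equivFin Ξ) b : ℕ) + 1) ≤ cum pR s ((Fintype.equivFin Ξ) a) :=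
      cum_mono pR hpR s (by omega)
    linarith [hb.2, ha.1]

lemma sel_exists (hpR : ∀ ξ a, 0 ≤ pR ξ a) (hsum : ∀ s, ∑ a, pR s a = 1) (s : Ξ) {y : ℝ}
    (h0 : 0 ≤ y) (h1 : y < 1) :
    ∃ ξ', cum pR s ((Fintype.equivFin Ξ) ξ') ≤ y ∧
      y < cum pR s (((Fintype.equivFin Ξ) ξ' : ℕ) + 1) := by
  classical
  set N := Fintype.card Ξ with hN
  have hNpos : 0 < N := Fintype.card_pos
  set ks : Finset ℕ := (Finset.range N).filter (fun k => cum pR s k ≤ y) with hks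
  have hne : ks.Nonempty := by
    refine ⟨0, ?_⟩
    simp only [hks, Finset.mem_filter, Finset.mem_range]
    exact ⟨hNpos, by rw [cum_zero]; exact h0⟩
  set k := ks.max' hne with hk
  have hkmem : k ∈ ks := Finset.max'_mem ks hne
  simp only [hks, Finset.mem_filter, Finset.mem_range] at hkmem
  obtain ⟨hkN, hky⟩ := hkmem
  refine ⟨(Fintype.equivFin Ξ).symm ⟨k, hkN⟩, ?_, ?_⟩
  · rw [Equiv.apply_symm_apply]
    exact hky
  · rw [Equiv.apply_symm_apply]
    show y < cum pR s (k + 1)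
    rcases Nat.lt_or_ge (k+1) N with h | h
    · by_contra hcon
      push_neg at hcon
      have : k + 1 ∈ ks := by
        simp only [hks, Finset.mem_filter, Finset.mem_range]
        exact ⟨h, hcon⟩
      have := Finset.le_max' ks (k+1) this
      omega
    · have : cum pR s N ≤ cum pR s (k+1) := cum_mono pR hpR s h
      rw [cum_card pR hsum s] at this
      linarith

lemma sel_eq (hpR : ∀ ξ a, 0 ≤ pR ξ a) {s : Ξ} {y : ℝ} {ξ' : Ξ}
    (hb : cum pR s ((Fintype.equivFin Ξ) ξ') ≤ y ∧
      y < cum pR s (((Fintype.equivFin Ξ) ξ' : ℕ) + 1)) : sel pR s y = ξ' := by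
  rw [sel, dif_pos ⟨ξ', hb⟩]
  exact sel_unique pR hpR (Exists.choose_spec (⟨ξ', hb⟩ :
    ∃ a, cum pR s ((Fintype.equivFin Ξ) a) ≤ y ∧
      y < cum pR s (((Fintype.equivFin Ξ) a : ℕ) + 1))) hb

lemma sel_mem (hpR : ∀ ξ a, 0 ≤ pR ξ a) (hsum : ∀ s, ∑ a, pR s a = 1) (s : Ξ) {y : ℝ}
    (h0 : 0 ≤ y) (h1 : y < 1) :
    cum pR s ((Fintype.equivFin Ξ) (sel pR s y)) ≤ y ∧
      y < cum pR s (((Fintype.equivFin Ξ) (sel pR s y) : ℕ) + 1) := by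
  obtain ⟨ξ', hb⟩ := sel_exists pR hpR hsum s h0 h1
  rw [sel_eq pR hpR hb]
  exact hb

end Chain

section Chain2

variable {Ξ : Type} [Fintype Ξ] [Nonempty Ξ]

/-- the state-and-interval process driven by a single uniform sample `x`. -/
noncomputable def Fc (pR : Ξ → Ξ → ℝ) (ξ₀ : Ξ) : ℕ → ℝ → Ξ × ℝ × ℝ
  | 0, _ => (ξ₀, 0, 1)
  | t+1, x =>
    let q := Fc pR ξ₀ t x
    if q.2.1 ≤ x ∧ x < q.2.2 then
      let s' := sel pR q.1 ((x - q.2.1) / (q.2.2 - q.2.1))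
      (s', q.2.1 + (q.2.2 - q.2.1) * cum pR q.1 ((Fintype.equivFin Ξ) s'),
        q.2.1 + (q.2.2 - q.2.1) * cum pR q.1 (((Fintype.equivFin Ξ) s' : ℕ) + 1))
    else q

/-- the constructed Markov chain. -/
noncomputable def Zc (pR : Ξ → Ξ → ℝ) (ξ₀ : Ξ) (t : ℕ) (x : ℝ) : Ξ := (Fc pR ξ₀ t x).1

/-- the interval of the uniform sample corresponding to a finite trajectory `w`. -/
noncomputable def ABc (pR : Ξ → Ξ → ℝ) (w : ℕ → Ξ) : ℕ → ℝ × ℝ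
  | 0 => (0, 1)
  | t+1 =>
    let q := ABc pR w t
    (q.1 + (q.2 - q.1) * cum pR (w t) ((Fintype.equivFin Ξ) (w (t+1))),
      q.1 + (q.2 - q.1) * cum pR (w t) (((Fintype.equivFin Ξ) (w (t+1)) : ℕ) + 1))

variable (pR : Ξ → Ξ → ℝ) (ξ₀ : Ξ)
variable (hpR : ∀ ξ a, 0 < pR ξ a) (hsum : ∀ s, ∑ a, pR s a = 1)
include hpR hsum

lemma ABc_len (w : ℕ → Ξ) : ∀ t, (ABc pR w t).2 - (ABc pR w t).1
    = ∏ j ∈ Finset.range t, pR (w j) (w (j+1)) := by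
  intro t
  induction t with
  | zero => simp [ABc]
  | succ t ih =>
    show (ABc pR w t).1 + ((ABc pR w t).2 - (ABc pR w t).1) * cum pR (w t) _
        - ((ABc pR w t).1 + ((ABc pR w t).2 - (ABc pR w t).1) * cum pR (w t) _) = _
    rw [Finset.prod_range_succ, ← ih, cum_succ pR (w t) (w (t+1))]
    ring

lemma ABc_len_pos (w : ℕ → Ξ) (t : ℕ) : 0 < (ABc pR w t).2 - (ABc pR w t).1 := by
  rw [ABc_len pR hpR hsum]
  exact Finset.prod_pos fun j _ => hpR (w j) (w (j+1))

lemma ABc_nested (w : ℕ → Ξ) (t : ℕ) :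
    (ABc pR w t).1 ≤ (ABc pR w (t+1)).1 ∧ (ABc pR w (t+1)).2 ≤ (ABc pR w t).2 := by
  have hlen := ABc_len_pos pR hpR hsum w t
  have hc0 : 0 ≤ cum pR (w t) ((Fintype.equivFin Ξ) (w (t+1))) :=
    cum_nonneg pR (fun ξ a => (hpR ξ a).le) (w t) _
  have hc1 : cum pR (w t) (((Fintype.equivFin Ξ) (w (t+1)) : ℕ) + 1) ≤ 1 :=
    cum_le_one pR (fun ξ a => (hpR ξ a).le) hsum (w t) _
  constructor
  · show (ABc pR w t).1 ≤ (ABc pR w t).1 + ((ABc pR w t).2 - (ABc pR w t).1) * _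
    nlinarith
  · show (ABc pR w t).1 + ((ABc pR w t).2 - (ABc pR w t).1) * _ ≤ (ABc pR w t).2
    nlinarith

lemma ABc_unit (w : ℕ → Ξ) (t : ℕ) : 0 ≤ (ABc pR w t).1 ∧ (ABc pR w t).2 ≤ 1 := by
  induction t with
  | zero => simp [ABc]
  | succ t ih =>
    have := ABc_nested pR hpR hsum w t
    exact ⟨le_trans ih.1 this.1, le_trans this.2 ih.2⟩

omit hpR hsum in
lemma Fc_outside {x : ℝ} (hx : x ∉ Ico (0:ℝ) 1) : ∀ t, Fc pR ξ₀ t x = (ξ₀, 0, 1) := by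
  intro t
  induction t with
  | zero => rfl
  | succ t ih =>
    show (if (Fc pR ξ₀ t x).2.1 ≤ x ∧ x < (Fc pR ξ₀ t x).2.2 then _ else Fc pR ξ₀ t x) = _
    rw [ih]
    rw [if_neg]
    · intro h
      exact hx ⟨h.1, h.2⟩

lemma Fc_inv {x : ℝ} (hx : x ∈ Ico (0:ℝ) 1) :
    ∀ t, (Fc pR ξ₀ t x).2.1 ≤ x ∧ x < (Fc pR ξ₀ t x).2.2 := by
  intro t
  induction t with
  | zero => exact ⟨hx.1, hx.2⟩
  | succ t ih =>
    obtain ⟨h1, h2⟩ := ih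
    have hba : 0 < (Fc pR ξ₀ t x).2.2 - (Fc pR ξ₀ t x).2.1 := by linarith
    set a := (Fc pR ξ₀ t x).2.1
    set b := (Fc pR ξ₀ t x).2.2
    set y := (x - a) / (b - a) with hy
    have hy0 : 0 ≤ y := div_nonneg (by linarith) (by linarith)
    have hy1 : y < 1 := (div_lt_one hba).2 (by linarith)
    have hmem := sel_mem pR (fun ξ a => (hpR ξ a).le) hsum (Fc pR ξ₀ t x).1 hy0 hy1
    show ((Fc pR ξ₀ (t+1) x).2.1 ≤ x ∧ x < (Fc pR ξ₀ (t+1) x).2.2)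
    have hstep : Fc pR ξ₀ (t+1) x
        = (sel pR (Fc pR ξ₀ t x).1 y,
            a + (b - a) * cum pR (Fc pR ξ₀ t x).1
              ((Fintype.equivFin Ξ) (sel pR (Fc pR ξ₀ t x).1 y)),
            a + (b - a) * cum pR (Fc pR ξ₀ t x).1
              (((Fintype.equivFin Ξ) (sel pR (Fc pR ξ₀ t x).1 y) : ℕ) + 1)) := by
      show (if a ≤ x ∧ x < b then _ else Fc pR ξ₀ t x) = _
      rw [if_pos ⟨h1, h2⟩]
    rw [hstep]
    constructor
    · show a + (b - a) * _ ≤ x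
      have : (b - a) * cum pR (Fc pR ξ₀ t x).1
          ((Fintype.equivFin Ξ) (sel pR (Fc pR ξ₀ t x).1 y)) ≤ (b - a) * y :=
        mul_le_mul_of_nonneg_left hmem.1 hba.le
      have hxy : (b - a) * y = x - a := by
        rw [hy]; field_simp
      linarith
    · show x < a + (b - a) * _
      have : (b - a) * y < (b - a) * cum pR (Fc pR ξ₀ t x).1
          (((Fintype.equivFin Ξ) (sel pR (Fc pR ξ₀ t x).1 y) : ℕ) + 1) :=
        (mul_lt_mul_iff_right₀ hba).2 hmem.2
      have hxy : (b - a) * y = x - a := by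
        rw [hy]; field_simp
      linarith

/-- the central cylinder-set identification. -/
lemma Fc_cyl (w : ℕ → Ξ) (hw0 : w 0 = ξ₀) : ∀ t : ℕ, ∀ x ∈ Ico (0:ℝ) 1,
    ((∀ j ≤ t, Zc pR ξ₀ j x = w j) ↔
      ((ABc pR w t).1 ≤ x ∧ x < (ABc pR w t).2)) ∧
    ((∀ j ≤ t, Zc pR ξ₀ j x = w j) → (Fc pR ξ₀ t x).2 = ABc pR w t) := by
  intro t
  induction t with
  | zero =>
    intro x hx
    constructor
    · constructor
      · intro _; exact ⟨hx.1, hx.2⟩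
      · intro _ j hj
        rw [Nat.le_zero.1 hj, hw0]
        rfl
    · intro _
      rfl
  | succ t ih =>
    intro x hx
    obtain ⟨ihiff, ihF⟩ := ih x hx
    have hablen := ABc_len_pos pR hpR hsum w t
    constructor
    · constructor
      · -- forward direction
        intro h
        have hprev : ∀ j ≤ t, Zc pR ξ₀ j x = w j := fun j hj => h j (hj.trans (Nat.le_succ t))
        have hmemI := ihiff.1 hprev
        have hF := ihF hprev
        have hstate : (Fc pR ξ₀ t x).1 = w t := hprev t le_rfl
        set a := (ABc pR w t).1
        set b := (ABc pR w t).2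
        have h1 : (Fc pR ξ₀ t x).2.1 = a := by rw [hF]
        have h2 : (Fc pR ξ₀ t x).2.2 = b := by rw [hF]
        have hba : 0 < b - a := hablen
        set y := (x - a) / (b - a) with hy
        have hy0 : 0 ≤ y := div_nonneg (by linarith [hmemI.1]) hba.le
        have hy1 : y < 1 := (div_lt_one hba).2 (by linarith [hmemI.2])
        have hstep : Fc pR ξ₀ (t+1) x
            = (sel pR (w t) y,
                a + (b - a) * cum pR (w t) ((Fintype.equivFin Ξ) (sel pR (w t) y)),
                a + (b - a) * cum pR (w t) (((Fintype.equivFin Ξ) (sel pR (w t) y) : ℕ) + 1)) := by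
          show (if (Fc pR ξ₀ t x).2.1 ≤ x ∧ x < (Fc pR ξ₀ t x).2.2 then _ else _) = _
          rw [if_pos (Fc_inv pR ξ₀ hpR hsum hx t)]
          rw [h1, h2, hstate]
        have hsel : sel pR (w t) y = w (t+1) := by
          have := h (t+1) le_rfl
          rw [Zc, hstep] at this
          exact this
        have hmem := sel_mem pR (fun ξ a => (hpR ξ a).le) hsum (w t) hy0 hy1
        rw [hsel] at hmem
        have hxy : (b - a) * y = x - a := by rw [hy]; field_simp
        constructor
        · show a + (b - a) * cum pR (w t) ((Fintype.equivFin Ξ) (w (t+1))) ≤ x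
          nlinarith [hmem.1]
        · show x < a + (b - a) * cum pR (w t) (((Fintype.equivFin Ξ) (w (t+1)) : ℕ) + 1)
          nlinarith [hmem.2]
      · -- backward direction
        intro hmem'
        have hsub := ABc_nested pR hpR hsum w t
        have hmemI : (ABc pR w t).1 ≤ x ∧ x < (ABc pR w t).2 :=
          ⟨le_trans hsub.1 hmem'.1, lt_of_lt_of_le hmem'.2 hsub.2⟩
        have hprev : ∀ j ≤ t, Zc pR ξ₀ j x = w j := ihiff.2 hmemI
        have hF := ihF hprev
        have hstate : (Fc pR ξ₀ t x).1 = w t := hprev t le_rfl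
        set a := (ABc pR w t).1
        set b := (ABc pR w t).2
        have h1 : (Fc pR ξ₀ t x).2.1 = a := by rw [hF]
        have h2 : (Fc pR ξ₀ t x).2.2 = b := by rw [hF]
        have hba : 0 < b - a := hablen
        set y := (x - a) / (b - a) with hy
        have hy0 : 0 ≤ y := div_nonneg (by linarith [hmemI.1]) hba.le
        have hy1 : y < 1 := (div_lt_one hba).2 (by linarith [hmemI.2])
        have hstep : Fc pR ξ₀ (t+1) x
            = (sel pR (w t) y,
                a + (b - a) * cum pR (w t) ((Fintype.equivFin Ξ) (sel pR (w t) y)),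
                a + (b - a) * cum pR (w t) (((Fintype.equivFin Ξ) (sel pR (w t) y) : ℕ) + 1)) := by
          show (if (Fc pR ξ₀ t x).2.1 ≤ x ∧ x < (Fc pR ξ₀ t x).2.2 then _ else _) = _
          rw [if_pos (Fc_inv pR ξ₀ hpR hsum hx t)]
          rw [h1, h2, hstate]
        have hxy : (b - a) * y = x - a := by rw [hy]; field_simp
        have hybound : cum pR (w t) ((Fintype.equivFin Ξ) (w (t+1))) ≤ y ∧
            y < cum pR (w t) (((Fintype.equivFin Ξ) (w (t+1)) : ℕ) + 1) := by
          have hm1 : a + (b - a) * cum pR (w t) ((Fintype.equivFin Ξ) (w (t+1))) ≤ x :=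
            hmem'.1
          have hm2 : x < a + (b - a) * cum pR (w t) (((Fintype.equivFin Ξ) (w (t+1)) : ℕ) + 1) :=
            hmem'.2
          constructor
          · rw [hy]
            rw [le_div_iff₀ hba]
            linarith
          · rw [hy]
            rw [div_lt_iff₀ hba]
            linarith
        have hsel : sel pR (w t) y = w (t+1) := sel_eq pR (fun ξ a => (hpR ξ a).le) hybound
        intro j hj
        rcases Nat.lt_succ_iff_lt_or_eq.1 (Nat.lt_succ_of_le hj) with h' | h'
        · exact hprev j (by omega)
        · subst h'
          rw [Zc, hstep]
          exact hsel
    · -- F-interval identification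
      intro h
      have hprev : ∀ j ≤ t, Zc pR ξ₀ j x = w j := fun j hj => h j (hj.trans (Nat.le_succ t))
      have hmemI := ihiff.1 hprev
      have hF := ihF hprev
      have hstate : (Fc pR ξ₀ t x).1 = w t := hprev t le_rfl
      set a := (ABc pR w t).1
      set b := (ABc pR w t).2
      have h1 : (Fc pR ξ₀ t x).2.1 = a := by rw [hF]
      have h2 : (Fc pR ξ₀ t x).2.2 = b := by rw [hF]
      have hba : 0 < b - a := hablen
      set y := (x - a) / (b - a) with hy
      have hstep : Fc pR ξ₀ (t+1) x
          = (sel pR (w t) y,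
              a + (b - a) * cum pR (w t) ((Fintype.equivFin Ξ) (sel pR (w t) y)),
              a + (b - a) * cum pR (w t) (((Fintype.equivFin Ξ) (sel pR (w t) y) : ℕ) + 1)) := by
        show (if (Fc pR ξ₀ t x).2.1 ≤ x ∧ x < (Fc pR ξ₀ t x).2.2 then _ else _) = _
        rw [if_pos (Fc_inv pR ξ₀ hpR hsum hx t)]
        rw [h1, h2, hstate]
      have hsel : sel pR (w t) y = w (t+1) := by
        have := h (t+1) le_rfl
        rw [Zc, hstep] at this
        exact this
      rw [hstep, hsel]
      rfl

end Chain2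

section Chain3

variable {Ξ : Type} [Fintype Ξ] [Nonempty Ξ] [MeasurableSpace Ξ] [MeasurableSingletonClass Ξ]
variable (pR : Ξ → Ξ → ℝ) (ξ₀ : Ξ)
variable (hpR : ∀ ξ a, 0 < pR ξ a) (hsum : ∀ s, ∑ a, pR s a = 1)

/-- extension of a finite word to an infinite one. -/
def wext (t : ℕ) (v : Fin (t+1) → Ξ) : ℕ → Ξ :=
  fun j => if h : j ≤ t then v ⟨j, by omega⟩ else v ⟨t, by omega⟩

include hpR hsum

lemma cyl_set (w : ℕ → Ξ) (hw0 : w 0 = ξ₀) (t : ℕ) :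
    {x : ℝ | ∀ j ≤ t, Zc pR ξ₀ j x = w j} ∩ Ico (0:ℝ) 1
      = Ico (ABc pR w t).1 (ABc pR w t).2 := by
  ext x
  constructor
  · rintro ⟨h, hx⟩
    exact (Fc_cyl pR ξ₀ hpR hsum w hw0 t x hx).1.1 h
  · intro hx
    have hunit := ABc_unit pR hpR hsum w t
    have hx01 : x ∈ Ico (0:ℝ) 1 := ⟨le_trans hunit.1 hx.1, lt_of_lt_of_le hx.2 hunit.2⟩
    exact ⟨(Fc_cyl pR ξ₀ hpR hsum w hw0 t x hx01).1.2 hx, hx01⟩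

omit hpR hsum in
lemma cyl_empty (w : ℕ → Ξ) (hw0 : w 0 ≠ ξ₀) (t : ℕ) :
    {x : ℝ | ∀ j ≤ t, Zc pR ξ₀ j x = w j} = ∅ := by
  refine Set.eq_empty_of_forall_notMem fun x hx => ?_
  have h := hx 0 (Nat.zero_le t)
  exact hw0 (by rw [← h]; rfl)

lemma PrC_cyl_pos (w : ℕ → Ξ) (hw0 : w 0 = ξ₀) (t : ℕ) :
    (volume.restrict (Ico (0:ℝ) 1)) {x : ℝ | ∀ j ≤ t, Zc pR ξ₀ j x = w j}
      = ENNReal.ofReal (∏ j ∈ Finset.range t, pR (w j) (w (j+1))) := by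
  rw [Measure.restrict_apply' measurableSet_Ico]
  rw [cyl_set pR ξ₀ hpR hsum w hw0 t, Real.volume_Ico, ABc_len pR hpR hsum w t]

omit hpR hsum in
lemma PrC_cyl_neg (w : ℕ → Ξ) (hw0 : w 0 ≠ ξ₀) (t : ℕ) :
    (volume.restrict (Ico (0:ℝ) 1)) {x : ℝ | ∀ j ≤ t, Zc pR ξ₀ j x = w j} = 0 := by
  rw [Measure.restrict_apply' measurableSet_Ico, cyl_empty pR ξ₀ w hw0 t, Set.empty_inter,
    measure_empty]

lemma chain_markov (p : Ξ → Ξ → ENNReal) (hp : ∀ ξ a, p ξ a = ENNReal.ofReal (pR ξ a)) :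
    IsMarkovChain (volume.restrict (Ico (0:ℝ) 1)) p (Zc pR ξ₀) := by
  intro t w
  by_cases hw0 : w 0 = ξ₀
  · rw [PrC_cyl_pos pR ξ₀ hpR hsum w hw0 (t+1), PrC_cyl_pos pR ξ₀ hpR hsum w hw0 t,
      Finset.prod_range_succ,
      ENNReal.ofReal_mul (Finset.prod_nonneg fun j _ => (hpR (w j) (w (j+1))).le), hp]
  · rw [PrC_cyl_neg pR ξ₀ w hw0 (t+1), PrC_cyl_neg pR ξ₀ w hw0 t, zero_mul]

omit hpR hsum in
lemma chain_Z0 : (volume.restrict (Ico (0:ℝ) 1)) {x : ℝ | Zc pR ξ₀ 0 x = ξ₀} = 1 := by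
  have : {x : ℝ | Zc pR ξ₀ 0 x = ξ₀} = Set.univ := by
    ext x; simp only [Set.mem_setOf_eq, Set.mem_univ, iff_true]; rfl
  rw [this, Measure.restrict_apply' measurableSet_Ico, Set.univ_inter, Real.volume_Ico]
  norm_num

instance : IsProbabilityMeasure (volume.restrict (Ico (0:ℝ) 1)) := by
  constructor
  rw [Measure.restrict_apply' measurableSet_Ico, Set.univ_inter, Real.volume_Ico]
  norm_num

lemma Zc_meas (t : ℕ) : Measurable (Zc pR ξ₀ t) := by
  have key : ∀ ξ : Ξ, MeasurableSet (Zc pR ξ₀ t ⁻¹' {ξ}) := by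
    intro ξ
    have hdecomp : Zc pR ξ₀ t ⁻¹' {ξ}
        = (Zc pR ξ₀ t ⁻¹' {ξ} ∩ Ico (0:ℝ) 1) ∪ (Zc pR ξ₀ t ⁻¹' {ξ} ∩ (Ico (0:ℝ) 1)ᶜ) := by
      rw [← Set.inter_union_distrib_left, Set.union_compl_self, Set.inter_univ]
    have part2m : MeasurableSet (Zc pR ξ₀ t ⁻¹' {ξ} ∩ (Ico (0:ℝ) 1)ᶜ) := by
      by_cases hξ : ξ = ξ₀
      · have part2 : Zc pR ξ₀ t ⁻¹' {ξ} ∩ (Ico (0:ℝ) 1)ᶜ = (Ico (0:ℝ) 1)ᶜ := by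
          subst hξ
          ext x
          simp only [Set.mem_inter_iff, Set.mem_preimage, Set.mem_singleton_iff,
            Set.mem_compl_iff]
          constructor
          · exact fun h => h.2
          · intro h
            refine ⟨?_, h⟩
            show (Fc pR ξ t x).1 = ξ
            rw [Fc_outside pR ξ h t]
        rw [part2]
        exact measurableSet_Ico.compl
      · have part2 : Zc pR ξ₀ t ⁻¹' {ξ} ∩ (Ico (0:ℝ) 1)ᶜ = ∅ := by
          refine Set.eq_empty_of_forall_notMem fun x hx => ?_
          apply hξ
          rw [← hx.1]
          show Zc pR ξ₀ t x = ξ₀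
          show (Fc pR ξ₀ t x).1 = ξ₀
          rw [Fc_outside pR ξ₀ hx.2 t]
        rw [part2]
        exact MeasurableSet.empty
    have part1 : Zc pR ξ₀ t ⁻¹' {ξ} ∩ Ico (0:ℝ) 1
        = ⋃ (v : Fin (t+1) → Ξ), ⋃ (_ : v ⟨t, Nat.lt_succ_self t⟩ = ξ ∧ v 0 = ξ₀),
            Ico (ABc pR (wext t v) t).1 (ABc pR (wext t v) t).2 := by
      ext x
      simp only [Set.mem_inter_iff, Set.mem_preimage, Set.mem_singleton_iff, Set.mem_iUnion]
      constructor
      · rintro ⟨hZ, hx⟩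
        refine ⟨fun j => Zc pR ξ₀ (j : ℕ) x, ⟨hZ, rfl⟩, ?_⟩
        have hw0 : wext t (fun j : Fin (t+1) => Zc pR ξ₀ (j : ℕ) x) 0 = ξ₀ := by
          rw [wext, dif_pos (Nat.zero_le t)]
          rfl
        refine (Fc_cyl pR ξ₀ hpR hsum _ hw0 t x hx).1.1 fun j hj => ?_
        rw [wext, dif_pos hj]
      · rintro ⟨v, ⟨hvt, hv0⟩, hmem⟩
        have hw0 : wext t v 0 = ξ₀ := by
          rw [wext, dif_pos (Nat.zero_le t)]
          exact hv0
        have hunit := ABc_unit pR hpR hsum (wext t v) t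
        have hx01 : x ∈ Ico (0:ℝ) 1 :=
          ⟨le_trans hunit.1 hmem.1, lt_of_lt_of_le hmem.2 hunit.2⟩
        have hall := (Fc_cyl pR ξ₀ hpR hsum (wext t v) hw0 t x hx01).1.2 hmem
        have := hall t le_rfl
        rw [wext, dif_pos le_rfl] at this
        exact ⟨this.trans hvt, hx01⟩
    rw [hdecomp]
    refine MeasurableSet.union ?_ part2m
    rw [part1]
    exact MeasurableSet.iUnion fun v => MeasurableSet.iUnion fun _ => measurableSet_Ico
  exact measurable_to_countable fun x => key (Zc pR ξ₀ t x)

end Chain3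

/-- iterated consumption process driven by a given chain. -/
noncomputable def citer {Ξ : Type} (f : ℝ → Ξ → ℝ) (Z : ℕ → ℝ → Ξ) (c₀ : ℝ) : ℕ → ℝ → ℝ
  | 0, _ => c₀
  | t+1, x => f (citer f Z c₀ t x) (Z t x)


/-- **stability in the limited-commitment risk-sharing model.**
If the first best is not sustainable, i.e. `∩_ξ I_ξ = ∅`, equivalently
`c_min < c_max`, then there is a unique probability distribution `π` on
`[c_min, c_max]` such that for every initial shock `ξ₀` and every initial value
`c₀ ∈ [c_min, c_max]` the distributions of the consumption process
`c_{t+1} = f(c_t, ξ_t)` (driven by a Markov chain with all transition probabilities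
positive) converge to `π` in the uniform metric. -/
theorem stmt16
    {Ξ : Type} [Fintype Ξ] [Nonempty Ξ] [MeasurableSpace Ξ] [MeasurableSingletonClass Ξ]
    (cl cu : Ξ → ℝ) (hlecu : ∀ ξ, cl ξ ≤ cu ξ)
    (f : ℝ → Ξ → ℝ)
    (hf : ∀ (c : ℝ) (ξ : Ξ),
      f c ξ = if cu ξ < c then cu ξ else if c < cl ξ then cl ξ else c)
    (cmin cmax : ℝ)
    (hcmin : cmin = Finset.univ.inf' Finset.univ_nonempty cu)
    (hcmax : cmax = Finset.univ.sup' Finset.univ_nonempty cl)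
    (hlt : cmin < cmax)
    (p : Ξ → Ξ → ENNReal) (hp_pos : ∀ ξ ξ', 0 < p ξ ξ') (hp_sum : ∀ ξ, ∑ ξ', p ξ ξ' = 1) :
    ∃! π : Measure ℝ, IsProbabilityMeasure π ∧ π (Icc cmin cmax) = 1 ∧
      ∀ (Ω : Type) [MeasurableSpace Ω] (Pr : Measure Ω), IsProbabilityMeasure Pr →
      ∀ (Z : ℕ → Ω → Ξ), (∀ t, Measurable (Z t)) → IsMarkovChain Pr p Z →
      ∀ ξ₀ : Ξ, Pr {ω | Z 0 ω = ξ₀} = 1 →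
      ∀ c₀ ∈ Icc cmin cmax,
      ∀ (c : ℕ → Ω → ℝ), (∀ ω, c 0 ω = c₀) →
        (∀ t ω, c (t + 1) ω = f (c t ω) (Z t ω)) →
      ∀ ε > (0:ℝ), ∃ t₀ : ℕ, ∀ t ≥ t₀, ∀ r : ℝ,
        |(Pr {ω | c t ω ≤ r}).toReal - (π (Iic r)).toReal| ≤ ε := by
    -- basic facts about the transition probabilities
  have hptop : ∀ ξ a, p ξ a ≠ ⊤ := by
    intro ξ a
    have hle : p ξ a ≤ 1 := by
      rw [← hp_sum ξ]
      exact Finset.single_le_sum (fun a' _ => zero_le) (Finset.mem_univ a)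
    exact ne_top_of_le_ne_top ENNReal.one_ne_top hle
  set pR : Ξ → Ξ → ℝ := fun ξ a => (p ξ a).toReal with hpRdef
  have hp : ∀ ξ a, p ξ a = ENNReal.ofReal (pR ξ a) := fun ξ a =>
    (ENNReal.ofReal_toReal (hptop ξ a)).symm
  have hpRpos : ∀ ξ a, 0 < pR ξ a := fun ξ a =>
    ENNReal.toReal_pos (hp_pos ξ a).ne' (hptop ξ a)
  have hpRsum : ∀ ξ, ∑ a, pR ξ a = 1 := by
    intro ξ
    have := ENNReal.toReal_sum (s := Finset.univ) (f := fun a => p ξ a)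
      (fun a _ => hptop ξ a)
    rw [hp_sum ξ] at this
    simpa using this.symm
  -- facts about the clamp function
  have hfminmax : ∀ c ξ, f c ξ = min (max c (cl ξ)) (cu ξ) := by
    intro c ξ
    rw [hf]
    rcases lt_or_ge (cu ξ) c with h1 | h1
    · rw [if_pos h1, max_eq_left (le_trans (hlecu ξ) h1.le), min_eq_right h1.le]
    · rw [if_neg (not_lt.2 h1)]
      rcases lt_or_ge c (cl ξ) with h2 | h2
      · rw [if_pos h2, max_eq_right h2.le, min_eq_left (hlecu ξ)]
      · rw [if_neg (not_lt.2 h2), max_eq_left h2, min_eq_left h1]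
  have hfm : ∀ ξ, Monotone (fun c => f c ξ) := by
    intro ξ a b hab
    simp only [hfminmax]
    exact min_le_min (max_le_max hab le_rfl) le_rfl
  have hcminle : ∀ ξ, cmin ≤ cu ξ := by
    intro ξ
    rw [hcmin]
    exact Finset.inf'_le cu (Finset.mem_univ ξ)
  have hclle : ∀ ξ, cl ξ ≤ cmax := by
    intro ξ
    rw [hcmax]
    exact Finset.le_sup' cl (Finset.mem_univ ξ)
  have hrange : ∀ ξ, ∀ c ∈ Icc cmin cmax, f c ξ ∈ Icc cmin cmax := by
    intro ξ c hc
    rw [hfminmax]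
    constructor
    · exact le_min (le_trans hc.1 (le_max_left c (cl ξ))) (hcminle ξ)
    · exact le_trans (min_le_left _ _) (max_le hc.2 (hclle ξ))
  have hstar : ∃ ξs, ∀ c ∈ Icc cmin cmax, f c ξs = cmin := by
    obtain ⟨ξs, _, hξs⟩ := Finset.exists_mem_eq_inf' (Finset.univ_nonempty (α := Ξ)) cu
    rw [← hcmin] at hξs
    refine ⟨ξs, fun c hc => ?_⟩
    have h1 : cu ξs = cmin := hξs.symm
    rw [hfminmax, max_eq_left (le_trans (le_trans (hlecu ξs) hξs.ge) hc.1), h1,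
      min_eq_right hc.1]
  set S : RSSetup Ξ := ⟨f, pR, cmin, cmax, hpRpos, hpRsum, hlt, hfm, hrange, hstar⟩ with hSdef
  -- the convergence property
  have hconv : ∀ (Ω : Type) [MeasurableSpace Ω] (Pr : Measure Ω), IsProbabilityMeasure Pr →
      ∀ (Z : ℕ → Ω → Ξ), (∀ t, Measurable (Z t)) → IsMarkovChain Pr p Z →
      ∀ ξ₀ : Ξ, Pr {ω | Z 0 ω = ξ₀} = 1 →
      ∀ c₀ ∈ Icc cmin cmax,
      ∀ (c : ℕ → Ω → ℝ), (∀ ω, c 0 ω = c₀) →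
        (∀ t ω, c (t + 1) ω = f (c t ω) (Z t ω)) →
      ∀ ε > (0:ℝ), ∃ t₀ : ℕ, ∀ t ≥ t₀, ∀ r : ℝ,
        |(Pr {ω | c t ω ≤ r}).toReal - (S.pilim (Iic r)).toReal| ≤ ε := by
    intro Ω mΩ Pr hPr Z hZ hM ξ₀ hξ₀ c₀ hc₀ c hc0 hcrec ε hε
    obtain ⟨n₀, hn₀⟩ := Filter.tendsto_atTop'.1 S.rate_tendsto (Iio ε) (Iio_mem_nhds hε)
    refine ⟨n₀ + 1, fun t ht r => ?_⟩
    have hteq : t = (t - 1) + 1 := by omega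
    have hkey := key_lemma S p hp (t - 1) Ω mΩ Pr hPr Z hZ hM ξ₀ hξ₀ c₀ c Set.univ
      MeasurableSet.univ measure_univ (fun ω _ => hc0 ω) hcrec r
    have hset : {ω | c t ω ≤ r} = {ω | c ((t-1)+1) ω ≤ r} := by rw [← hteq]
    rw [hset, hkey, ENNReal.toReal_ofReal (S.Q_nonneg _ _ _ _), S.pilim_Iic,
      ENNReal.toReal_ofReal (S.Glim_nonneg r)]
    have hclose := S.Q_close (t - 1) r ξ₀ hc₀
    have hrate : (1 - S.delta) ^ ((t-1) / 2) < ε := hn₀ (t-1) (by omega)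
    linarith [hclose, abs_nonneg (S.Q (t-1) ξ₀ c₀ r - S.Glim r)]
  refine ⟨S.pilim, ⟨inferInstance, S.pilim_Icc, hconv⟩, ?_⟩
  -- uniqueness
  intro π' ⟨hπ'P, _, hπ'conv⟩
  have hIic : ∀ r : ℝ, π' (Iic r) = S.pilim (Iic r) := by
    intro r
    set ξb : Ξ := Classical.arbitrary Ξ
    set Zb : ℕ → ℝ → Ξ := Zc pR ξb with hZb
    set cb : ℕ → ℝ → ℝ := citer f Zb cmin with hcb
    have hcb0 : ∀ x, cb 0 x = cmin := fun x => rfl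
    have hcbrec : ∀ t x, cb (t+1) x = f (cb t x) (Zb t x) := fun t x => rfl
    have habs : ∀ ε > (0:ℝ),
        |(π' (Iic r)).toReal - (S.pilim (Iic r)).toReal| ≤ 2 * ε := by
      intro ε hε
      obtain ⟨t₀, ht₀⟩ := hπ'conv ℝ (volume.restrict (Ico (0:ℝ) 1)) inferInstance
        Zb (Zc_meas pR ξb hpRpos hpRsum) (chain_markov pR ξb hpRpos hpRsum p hp)
        ξb (chain_Z0 pR ξb) cmin ⟨le_rfl, hlt.le⟩ cb hcb0 hcbrec ε hε
      obtain ⟨t₁, ht₁⟩ := hconv ℝ (volume.restrict (Ico (0:ℝ) 1)) inferInstance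
        Zb (Zc_meas pR ξb hpRpos hpRsum) (chain_markov pR ξb hpRpos hpRsum p hp)
        ξb (chain_Z0 pR ξb) cmin ⟨le_rfl, hlt.le⟩ cb hcb0 hcbrec ε hε
      have h1 := ht₀ (max t₀ t₁) (le_max_left _ _) r
      have h2 := ht₁ (max t₀ t₁) (le_max_right _ _) r
      set q := ((volume.restrict (Ico (0:ℝ) 1)) {ω | cb (max t₀ t₁) ω ≤ r}).toReal
      rw [abs_le] at h1 h2
      rw [abs_le]
      constructor <;> linarith [h1.1, h1.2, h2.1, h2.2]
    have : |(π' (Iic r)).toReal - (S.pilim (Iic r)).toReal| = 0 := by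
      by_contra hne
      have hpos : 0 < |(π' (Iic r)).toReal - (S.pilim (Iic r)).toReal| :=
        lt_of_le_of_ne (abs_nonneg _) (Ne.symm hne)
      have := habs (|(π' (Iic r)).toReal - (S.pilim (Iic r)).toReal| / 4) (by linarith)
      linarith
    have heq : (π' (Iic r)).toReal = (S.pilim (Iic r)).toReal := by
      have := abs_eq_zero.1 this
      linarith
    haveI := hπ'P
    exact (ENNReal.toReal_eq_toReal_iff' (measure_ne_top π' _) (measure_ne_top S.pilim _)).1 heq
  haveI := hπ'P
  exact Measure.ext_of_Iic π' S.pilim hIic
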